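/- Let p be an odd prime number and let ξ be a primitive p-th root of unity in ℂ. Then ∑_{j=1}^{p-1} 1/((1-ξ^j)(1-ξ^{2j})) = (p-1)(11-p)/24. -/

import Mathlib

open Finset

private lemma geom_aux (x : ℂ) (n : ℕ) :
    (1 - x) * ∑ k ∈ range n, (k : ℂ) * x ^ k
      = (∑ k ∈ range n, x ^ k) - 1 - ((n : ℂ) - 1) * x ^ n := by
  induction n with
  | zero => simp
  | succ n ih =>
    rw [sum_range_succ, sum_range_succ, mul_add, ih]
    push_cast
    ring

private lemma inv_one_sub_aux (p : ℕ) (x : ℂ) (hx1 : x ^ p = 1) (hx : x ≠ 1) :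
    (1 - x) * (∑ k ∈ range p, (k : ℂ) * x ^ k) = -(p : ℂ) := by
  rw [geom_aux, geom_sum_eq hx, hx1]
  ring

private lemma rootsum (p : ℕ) (hp : 0 < p) (ξ : ℂ) (hξ : IsPrimitiveRoot ξ p) (m : ℕ) :
    ∑ j ∈ Icc 1 (p - 1), (ξ ^ m) ^ j = if p ∣ m then ((p : ℂ) - 1) else -1 := by
  have hIcc : Icc 1 (p - 1) = (range p).erase 0 := by
    ext x
    simp only [mem_Icc, mem_erase, mem_range]
    omega
  rw [hIcc, Finset.sum_erase_eq_sub (by simpa using hp)]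
  rw [pow_zero]
  by_cases h : p ∣ m
  · have hone : ξ ^ m = 1 := (hξ.pow_eq_one_iff_dvd m).mpr h
    simp [hone, h]
  · have hne : ξ ^ m ≠ 1 := fun c => h ((hξ.pow_eq_one_iff_dvd m).mp c)
    rw [geom_sum_eq hne, ← pow_mul, mul_comm m p, pow_mul, hξ.pow_eq_one, one_pow]
    simp [h]

private lemma uniq_k (p l : ℕ) (hp : 0 < p) (hl : l < p) :
    ∑ k ∈ range p, (if p ∣ (k + 2 * l) then (k : ℂ) * (l : ℂ) else 0)
      = (((2 * (p - l)) % p : ℕ) : ℂ) * l := by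
  set k0 := (2 * (p - l)) % p with hk0
  have hk0lt : k0 < p := Nat.mod_lt _ hp
  have hdvd : p ∣ k0 + 2 * l := by
    apply Nat.dvd_of_mod_eq_zero
    rw [hk0, Nat.mod_add_mod]
    have h2 : 2 * (p - l) + 2 * l = 2 * p := by omega
    rw [h2, mul_comm]
    exact Nat.mul_mod_right p 2
  rw [Finset.sum_eq_single k0]
  · rw [if_pos hdvd]
  · intro b hb hbne
    rw [if_neg]
    intro hbd
    apply hbne
    have hb' : b + 2 * l ≡ 0 [MOD p] := Nat.modEq_zero_iff_dvd.mpr hbd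
    have hk' : k0 + 2 * l ≡ 0 [MOD p] := Nat.modEq_zero_iff_dvd.mpr hdvd
    have hmod : b % p = k0 % p := Nat.ModEq.add_right_cancel' (2 * l) (hb'.trans hk'.symm)
    rw [Nat.mod_eq_of_lt (mem_range.mp hb), Nat.mod_eq_of_lt hk0lt] at hmod
    exact hmod
  · intro h
    exact absurd (mem_range.mpr hk0lt) h

private lemma s1_aux (m : ℕ) : ∑ l ∈ Ioc 0 m, (l : ℂ) = m * (m + 1) / 2 := by
  induction m with
  | zero => simp
  | succ n ih =>
    rw [Finset.sum_Ioc_succ_top (Nat.zero_le _), ih]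
    push_cast
    ring

private lemma s2_aux (m : ℕ) : ∑ l ∈ Ioc 0 m, (l : ℂ) ^ 2 = m * (m + 1) * (2 * m + 1) / 6 := by
  induction m with
  | zero => simp
  | succ n ih =>
    rw [Finset.sum_Ioc_succ_top (Nat.zero_le _), ih]
    push_cast
    ring

-- the sum  E = ∑_{l<p} ((2(p-l)) mod p) * l  for p = 2m+1
private lemma E_aux (p m : ℕ) (hm : p = 2 * m + 1) :
    ∑ l ∈ range p, (((2 * (p - l)) % p : ℕ) : ℂ) * l
      = 5 * (m : ℂ) * (m + 1) * (2 * m + 1) / 6 := by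
  have hp : 0 < p := by omega
  have hrange : range p = insert 0 (Ioc 0 (p - 1)) := by
    ext x
    simp only [mem_range, mem_insert, mem_Ioc]
    omega
  rw [hrange, Finset.sum_insert (by simp)]
  have hp1 : p - 1 = 2 * m := by omega
  rw [hp1]
  rw [← Finset.sum_Ioc_consecutive _ (Nat.zero_le m) (by omega : m ≤ 2 * m)]
  have hfirst : ∑ l ∈ Ioc 0 m, (((2 * (p - l)) % p : ℕ) : ℂ) * l
      = (p : ℂ) * (∑ l ∈ Ioc 0 m, (l : ℂ)) - 2 * ∑ l ∈ Ioc 0 m, (l : ℂ) ^ 2 := by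
    rw [Finset.mul_sum, Finset.mul_sum, ← Finset.sum_sub_distrib]
    refine sum_congr rfl fun l hl => ?_
    rw [mem_Ioc] at hl
    have h1 : 2 * (p - l) = p + (p - 2 * l) := by omega
    rw [h1, Nat.add_mod_left, Nat.mod_eq_of_lt (by omega)]
    rw [Nat.cast_sub (by omega : 2 * l ≤ p)]
    push_cast
    ring
  have hsecond : ∑ l ∈ Ioc m (2 * m), (((2 * (p - l)) % p : ℕ) : ℂ) * l
      = 2 * (p : ℂ) * ((∑ l ∈ Ioc 0 (2 * m), (l : ℂ)) - ∑ l ∈ Ioc 0 m, (l : ℂ))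
        - 2 * ((∑ l ∈ Ioc 0 (2 * m), (l : ℂ) ^ 2) - ∑ l ∈ Ioc 0 m, (l : ℂ) ^ 2) := by
    have hsplit1 : ∑ l ∈ Ioc m (2 * m), (l : ℂ)
        = (∑ l ∈ Ioc 0 (2 * m), (l : ℂ)) - ∑ l ∈ Ioc 0 m, (l : ℂ) := by
      rw [← Finset.sum_Ioc_consecutive _ (Nat.zero_le m) (by omega : m ≤ 2 * m)]
      ring
    have hsplit2 : ∑ l ∈ Ioc m (2 * m), (l : ℂ) ^ 2
        = (∑ l ∈ Ioc 0 (2 * m), (l : ℂ) ^ 2) - ∑ l ∈ Ioc 0 m, (l : ℂ) ^ 2 := by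
      rw [← Finset.sum_Ioc_consecutive _ (Nat.zero_le m) (by omega : m ≤ 2 * m)]
      ring
    rw [← hsplit1, ← hsplit2, Finset.mul_sum, Finset.mul_sum, ← Finset.sum_sub_distrib]
    refine sum_congr rfl fun l hl => ?_
    rw [mem_Ioc] at hl
    rw [Nat.mod_eq_of_lt (by omega)]
    rw [Nat.cast_mul, Nat.cast_sub (by omega : l ≤ p)]
    push_cast
    ring
  rw [hfirst, hsecond, s1_aux, s2_aux, s1_aux, s2_aux]
  have hpc : (p : ℂ) = 2 * (m : ℂ) + 1 := by rw [hm]; push_cast; ring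
  rw [hpc]
  push_cast
  ring

/-- Let `p` be an odd prime and `ξ` a primitive `p`-th root of unity in `ℂ`.
Then `∑_{j=1}^{p-1} 1/((1-ξ^j)(1-ξ^{2j})) = (p-1)(11-p)/24`. -/
theorem sum_inv_one_sub_primitiveRoot_two (p : ℕ) (hp : p.Prime) (hodd : Odd p) (ξ : ℂ)
    (hξ : IsPrimitiveRoot ξ p) :
    ∑ j ∈ Finset.Icc 1 (p - 1), 1 / ((1 - ξ ^ j) * (1 - ξ ^ (2 * j)))
      = ((p : ℂ) - 1) * (11 - (p : ℂ)) / 24 := by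
  obtain ⟨m, hm⟩ := hodd
  have hp0 : 0 < p := hp.pos
  have hm1 : 1 ≤ m := by have := hp.two_le; omega
  have hpC : (p : ℂ) ≠ 0 := Nat.cast_ne_zero.mpr hp0.ne'
  -- step 1 : pointwise rewriting of each term
  have step1 : ∀ j ∈ Icc 1 (p - 1),
      1 / ((1 - ξ ^ j) * (1 - ξ ^ (2 * j)))
        = (∑ k ∈ range p, (k : ℂ) * (ξ ^ j) ^ k) * (∑ l ∈ range p, (l : ℂ) * (ξ ^ (2 * j)) ^ l)
            / (p : ℂ) ^ 2 := by
    intro j hj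
    rw [mem_Icc] at hj
    have hj1 : ¬ p ∣ j := fun hd => by
      have := Nat.le_of_dvd (by omega) hd; omega
    have hj2 : ¬ p ∣ 2 * j := by
      intro hd
      rcases (Nat.Prime.dvd_mul hp).mp hd with h | h
      · have := Nat.le_of_dvd (by norm_num) h; omega
      · exact hj1 h
    have ha := inv_one_sub_aux p (ξ ^ j)
      (by rw [← pow_mul, mul_comm, pow_mul, hξ.pow_eq_one, one_pow])
      (fun c => hj1 ((hξ.pow_eq_one_iff_dvd j).mp c))
    have hb := inv_one_sub_aux p (ξ ^ (2 * j))
      (by rw [← pow_mul, mul_comm, pow_mul, hξ.pow_eq_one, one_pow])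
      (fun c => hj2 ((hξ.pow_eq_one_iff_dvd (2 * j)).mp c))
    have hna : (1 - ξ ^ j) ≠ 0 := by
      intro h
      rw [h, zero_mul] at ha
      exact hpC (neg_eq_zero.mp ha.symm)
    have hnb : (1 - ξ ^ (2 * j)) ≠ 0 := by
      intro h
      rw [h, zero_mul] at hb
      exact hpC (neg_eq_zero.mp hb.symm)
    rw [div_eq_div_iff (mul_ne_zero hna hnb) (pow_ne_zero 2 hpC)]
    linear_combination (p : ℂ) * hb - (∑ l ∈ range p, (l : ℂ) * (ξ ^ (2 * j)) ^ l) * (1 - ξ ^ (2 * j)) * ha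
  rw [Finset.sum_congr rfl step1, ← Finset.sum_div]
  -- step 2 : expand the products of sums
  have step2 : ∀ j ∈ Icc 1 (p - 1),
      (∑ k ∈ range p, (k : ℂ) * (ξ ^ j) ^ k) * (∑ l ∈ range p, (l : ℂ) * (ξ ^ (2 * j)) ^ l)
        = ∑ k ∈ range p, ∑ l ∈ range p, ((k : ℂ) * l) * (ξ ^ (k + 2 * l)) ^ j := by
    intro j _
    rw [Finset.sum_mul_sum]
    refine sum_congr rfl fun k _ => sum_congr rfl fun l _ => ?_
    have hpow : (ξ ^ j) ^ k * (ξ ^ (2 * j)) ^ l = (ξ ^ (k + 2 * l)) ^ j := by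
      rw [← pow_mul, ← pow_mul, ← pow_add, ← pow_mul]
      congr 1
      ring
    calc (k : ℂ) * (ξ ^ j) ^ k * ((l : ℂ) * (ξ ^ (2 * j)) ^ l)
        = ((k : ℂ) * l) * ((ξ ^ j) ^ k * (ξ ^ (2 * j)) ^ l) := by ring
      _ = ((k : ℂ) * l) * (ξ ^ (k + 2 * l)) ^ j := by rw [hpow]
  rw [Finset.sum_congr rfl step2, Finset.sum_comm]
  have step3 : ∀ k ∈ range p,
      ∑ j ∈ Icc 1 (p - 1), ∑ l ∈ range p, ((k : ℂ) * l) * (ξ ^ (k + 2 * l)) ^ j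
        = ∑ l ∈ range p, ((if p ∣ (k + 2 * l) then (k : ℂ) * l else 0) * p - (k : ℂ) * l) := by
    intro k _
    rw [Finset.sum_comm]
    refine sum_congr rfl fun l _ => ?_
    rw [← Finset.mul_sum, rootsum p hp0 ξ hξ (k + 2 * l)]
    by_cases h : p ∣ k + 2 * l
    · rw [if_pos h, if_pos h]; ring
    · rw [if_neg h, if_neg h]; ring
  rw [Finset.sum_congr rfl step3]
  -- step 4 : split the sums
  have step4 : ∑ k ∈ range p, ∑ l ∈ range p,
        ((if p ∣ (k + 2 * l) then (k : ℂ) * l else 0) * p - (k : ℂ) * l)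
      = (∑ k ∈ range p, ∑ l ∈ range p, (if p ∣ (k + 2 * l) then (k : ℂ) * l else 0)) * p
        - (∑ k ∈ range p, (k : ℂ)) * (∑ l ∈ range p, (l : ℂ)) := by
    rw [Finset.sum_mul, Finset.sum_mul_sum, ← Finset.sum_sub_distrib]
    refine sum_congr rfl fun k _ => ?_
    rw [Finset.sum_mul, ← Finset.sum_sub_distrib]
  rw [step4]
  -- the double "ite" sum
  have hE : ∑ k ∈ range p, ∑ l ∈ range p, (if p ∣ (k + 2 * l) then (k : ℂ) * l else 0)
      = 5 * (m : ℂ) * (m + 1) * (2 * m + 1) / 6 := by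
    rw [Finset.sum_comm]
    have : ∀ l ∈ range p,
        ∑ k ∈ range p, (if p ∣ (k + 2 * l) then (k : ℂ) * l else 0)
          = (((2 * (p - l)) % p : ℕ) : ℂ) * l := fun l hl =>
      uniq_k p l hp0 (mem_range.mp hl)
    rw [Finset.sum_congr rfl this]
    exact E_aux p m hm
  -- the Gauss sum
  have hG : ∑ k ∈ range p, (k : ℂ) = (m : ℂ) * (2 * m + 1) := by
    have hrange : range p = insert 0 (Ioc 0 (p - 1)) := by
      ext x
      simp only [mem_range, mem_insert, mem_Ioc]
      omega
    rw [hrange, Finset.sum_insert (by simp), s1_aux]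
    have : p - 1 = 2 * m := by omega
    rw [this]
    push_cast
    ring
  rw [hE, hG]
  have hpc : (p : ℂ) = 2 * (m : ℂ) + 1 := by rw [hm]; push_cast; ring
  rw [hpc]
  have hne : (2 * (m : ℂ) + 1) ≠ 0 := by rw [← hpc]; exact hpC
  field_simp
  rw [div_eq_iff (by rwa [mul_comm] at hne)]
  ring
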